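/- Let G, H ≤ K be isoclinic finite groups (K = ⟨G, Z(K)⟩ = ⟨H, Z(K)⟩), and let ρ₁, ρ₂ be irreducible complex representations of G extending to representations ρ̂₁, ρ̂₂ of K. Then the multisets of dimensions of the irreducible summands of ρ₁ ⊗ ρ₂ and of (ρ̂₁|_H) ⊗ (ρ̂₂|_H) coincide. -/

import Mathlib

open CategoryTheory Pointwise

noncomputable section

namespace Iso15

variable {Γ : Type} [Group Γ]

def subRep (V : FDRep ℂ Γ) (p : Submodule ℂ V) (hp : ∀ (g : Γ) x, x ∈ p → V.ρ g x ∈ p) :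
    Representation ℂ Γ p where
  toFun g := (V.ρ g).restrict (fun x hx => hp g x hx)
  map_one' := by ext x; simp [LinearMap.restrict_apply]
  map_mul' g h := by ext x; simp [LinearMap.restrict_apply]

def subFDRep (V : FDRep ℂ Γ) (p : Submodule ℂ V) (hp : ∀ (g : Γ) x, x ∈ p → V.ρ g x ∈ p) :
    FDRep ℂ Γ := FDRep.of (subRep V p hp)

def subIncl (V : FDRep ℂ Γ) (p : Submodule ℂ V) (hp : ∀ (g : Γ) x, x ∈ p → V.ρ g x ∈ p) :
    subFDRep V p hp ⟶ V where
  hom := FGModuleCat.ofHom p.subtype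
  comm g := by ext x; rfl

lemma nontrivial_of_simple (V : FDRep ℂ Γ) [Simple V] : Nontrivial V := by
  by_contra h
  have hs : Subsingleton V := not_nontrivial_iff_subsingleton.mp h
  apply id_nonzero V
  apply Action.hom_ext
  apply FGModuleCat.hom_ext; apply LinearMap.ext
  intro x
  exact @Subsingleton.elim _ hs _ _

theorem invariant_bot_or_top (V : FDRep ℂ Γ) [Simple V]
    (p : Submodule ℂ V) (hp : ∀ (g : Γ) x, x ∈ p → V.ρ g x ∈ p) : p = ⊥ ∨ p = ⊤ := by
  by_cases hbot : p = ⊥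
  · exact Or.inl hbot
  right
  obtain ⟨x, hxp, hx0⟩ := Submodule.exists_mem_ne_zero_of_ne_bot hbot
  have hmono : Mono (subIncl V p hp) := by
    constructor
    intro Z u v huv
    apply Action.hom_ext
    apply FGModuleCat.hom_ext; apply LinearMap.ext
    intro z
    have := congrArg (fun (f : Z ⟶ V) => f.hom z) huv
    simp only [Action.comp_hom] at this
    exact Subtype.ext this
  have hne : subIncl V p hp ≠ 0 := by
    intro h0
    apply hx0
    have := congrArg (fun (f : subFDRep V p hp ⟶ V) => f.hom ⟨x, hxp⟩) h0
    exact this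
  have hiso : IsIso (subIncl V p hp) := (Simple.mono_isIso_iff_nonzero _).mpr hne
  rw [Submodule.eq_top_iff']
  intro v
  have : (inv (subIncl V p hp) ≫ subIncl V p hp).hom v = v := by
    rw [IsIso.inv_hom_id]; rfl
  rw [← this]
  simp only [Action.comp_hom]
  rw [ConcreteCategory.comp_apply]; exact ((inv (subIncl V p hp)).hom v).2


lemma hom_comm_apply' {X Y : FDRep ℂ Γ} (f : X ⟶ Y) (g : Γ) (x : X) :
    f.hom (X.ρ g x) = Y.ρ g (f.hom x) := by
  have := f.comm g
  have h2 := congrArg (fun (u : X.V ⟶ Y.V) => u x) this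
  exact h2

theorem simple_of_no_invariant (V : FDRep ℂ Γ) (hnt : Nontrivial V)
    (hV : ∀ p : Submodule ℂ V, (∀ (g : Γ) x, x ∈ p → V.ρ g x ∈ p) → p = ⊥ ∨ p = ⊤) :
    Simple V := by
  constructor
  intro Y f hmono
  constructor
  · intro hiso h0
    obtain ⟨ginv, hg1, hg2⟩ := hiso.1
    rw [h0, Limits.comp_zero] at hg2
    obtain ⟨x, y, hxy⟩ := hnt
    apply hxy
    have hv : ∀ v : V, v = (0 : V ⟶ V).hom v := by
      intro v
      have hv' := congrArg (fun (u : V ⟶ V) => u.hom v) hg2.symm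
      simpa using hv'
    rw [hv x, hv y]
    rfl
  · intro h0
    -- f.hom is injective
    have hker : ∀ (g : Γ) x, x ∈ LinearMap.ker (ConcreteCategory.hom (C := FGModuleCat ℂ) f.hom) → Y.ρ g x ∈ LinearMap.ker (ConcreteCategory.hom (C := FGModuleCat ℂ) f.hom) := by
      intro g x hx
      rw [LinearMap.mem_ker] at hx ⊢
      calc f.hom (Y.ρ g x) = V.ρ g (f.hom x) := hom_comm_apply' f g x
        _ = 0 := by rw [hx, map_zero]
    have hinj : Function.Injective f.hom := by
      rw [← LinearMap.ker_eq_bot]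
      by_contra hne
      obtain ⟨x, hxp, hx0⟩ := Submodule.exists_mem_ne_zero_of_ne_bot hne
      have hcomp : subIncl Y _ hker ≫ f = 0 ≫ f := by
        apply Action.hom_ext
        apply FGModuleCat.hom_ext; apply LinearMap.ext
        intro z
        simp only [Action.comp_hom]
        change f.hom ((LinearMap.ker (ConcreteCategory.hom (C := FGModuleCat ℂ) f.hom)).subtype z) = f.hom ((0 : _ →ₗ[ℂ] _) z)
        simpa using z.2
      have := (cancel_mono f).mp hcomp
      apply hx0
      have h := congrArg (fun (u : subFDRep Y _ hker ⟶ Y) => u.hom ⟨x, hxp⟩) this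
      exact h
    -- f.hom is surjective
    have hrg : ∀ (g : Γ) x, x ∈ LinearMap.range (ConcreteCategory.hom (C := FGModuleCat ℂ) f.hom) → V.ρ g x ∈ LinearMap.range (ConcreteCategory.hom (C := FGModuleCat ℂ) f.hom) := by
      rintro g x ⟨y, rfl⟩
      exact ⟨Y.ρ g y, hom_comm_apply' f g y⟩
    have hsurj : Function.Surjective f.hom := by
      rcases hV _ hrg with h | h
      · exfalso
        apply h0
        apply Action.hom_ext
        apply FGModuleCat.hom_ext; apply LinearMap.ext
        intro y
        have : f.hom y ∈ (⊥ : Submodule ℂ V) := h ▸ LinearMap.mem_range_self (ConcreteCategory.hom (C := FGModuleCat ℂ) f.hom) y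
        exact (Submodule.mem_bot ℂ).mp this
      · rw [← LinearMap.range_eq_top]; exact h
    -- build the inverse
    let e : Y ≃ₗ[ℂ] V := LinearEquiv.ofBijective (ConcreteCategory.hom (C := FGModuleCat ℂ) f.hom) ⟨hinj, hsurj⟩
    refine ⟨⟨⟨FGModuleCat.ofHom e.symm.toLinearMap, ?_⟩, ?_, ?_⟩⟩
    · intro g
      apply FGModuleCat.hom_ext; apply LinearMap.ext
      intro v
      apply hinj
      change f.hom (e.symm (V.ρ g v)) = f.hom (Y.ρ g (e.symm v))
      have h1 : f.hom (e.symm (V.ρ g v)) = V.ρ g v := e.apply_symm_apply _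
      rw [h1, hom_comm_apply']
      congr 1
      exact (e.apply_symm_apply v).symm
    · apply Action.hom_ext; apply FGModuleCat.hom_ext; apply LinearMap.ext; intro y
      change e.symm (f.hom y) = y
      exact e.symm_apply_apply y
    · apply Action.hom_ext; apply FGModuleCat.hom_ext; apply LinearMap.ext; intro v
      change f.hom (e.symm v) = v
      exact e.apply_symm_apply v


section Res
variable {K : Type} [Group K]

/-- Restriction of a representation of `K` to a subgroup. -/
def resFDRep (W : FDRep ℂ K) (G : Subgroup K) : FDRep ℂ ↥G :=
  FDRep.of ((W.ρ).comp G.subtype)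

lemma resFDRep_character (W : FDRep ℂ K) (G : Subgroup K) (g : ↥G) :
    (resFDRep W G).character g = W.character (g : K) := rfl

theorem center_scalar (W : FDRep ℂ K) [Simple W] (z : K) (hz : z ∈ Subgroup.center K) :
    ∃ c : ℂ, ∀ x : W, W.ρ z x = c • x := by
  have key : ∀ x : W, ∀ k : K, W.ρ z (W.ρ k x) = W.ρ k (W.ρ z x) := by
    intro x k
    have h1 : W.ρ z (W.ρ k x) = W.ρ (z * k) x := by rw [map_mul]; rfl
    have h2 : W.ρ k (W.ρ z x) = W.ρ (k * z) x := by rw [map_mul]; rfl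
    rw [h1, h2, (Subgroup.mem_center_iff.mp hz k)]
  let φ : W ⟶ W := ⟨FGModuleCat.ofHom (W.ρ z), fun k => by apply FGModuleCat.hom_ext; apply LinearMap.ext; intro x; exact key x k⟩
  obtain ⟨c, hc⟩ := CategoryTheory.endomorphism_simple_eq_smul_id (𝕜 := ℂ) φ
  refine ⟨c, fun x => ?_⟩
  have h := congrArg (fun u : W ⟶ W => u.hom x) hc
  simp only [Action.smul_hom, Action.id_hom] at h
  have h2 : W.ρ z x = (c • (𝟙 W.V : W.V ⟶ W.V)) x := h.symm
  exact h2

/-- Restriction of a simple rep of `K` to a subgroup `G` with `G ⊔ Z(K) = ⊤` is simple. -/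
theorem resFDRep_simple (W : FDRep ℂ K) [Simple W] (G : Subgroup K)
    (hG : G ⊔ Subgroup.center K = ⊤) : Simple (resFDRep W G) := by
  apply simple_of_no_invariant
  · exact nontrivial_of_simple W
  · intro p hp
    -- `p` is a `ℂ`-submodule of the carrier of `W`, invariant under all of `G`.
    have hpK : ∀ (k : K) x, x ∈ p → W.ρ k x ∈ p := by
      intro k x hx
      have hk : k ∈ (G : Set K) * (Subgroup.center K : Set K) := by
        rw [← Subgroup.mul_normal]
        rw [hG]
        trivial
      obtain ⟨g, hg, z, hz, rfl⟩ := hk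
      obtain ⟨c, hc⟩ := center_scalar W z hz
      have h1 : W.ρ (g * z) x = W.ρ g (W.ρ z x) := by rw [map_mul]; rfl
      rw [h1, hc x]
      exact hp ⟨g, hg⟩ (c • x) (Submodule.smul_mem p c hx)
    exact invariant_bot_or_top W p hpK

end Res
section Decomp
variable {Γ : Type} [Group Γ] [Fintype Γ]

theorem exists_invariant_compl (V : FDRep ℂ Γ)
    (p : Submodule ℂ V) (hp : ∀ (g : Γ) x, x ∈ p → V.ρ g x ∈ p) :
    ∃ q : Submodule ℂ V, (∀ (g : Γ) x, x ∈ q → V.ρ g x ∈ q) ∧ IsCompl p q := by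
  haveI : NeZero ((Fintype.card Γ : ℂ)) := ⟨Nat.cast_ne_zero.mpr Fintype.card_ne_zero⟩
  letI : Module (MonoidAlgebra ℂ Γ) V :=
    Module.compHom _ (Representation.asAlgebraHom V.ρ).toRingHom
  have hsmul : ∀ (r : MonoidAlgebra ℂ Γ) (x : V), r • x = Representation.asAlgebraHom V.ρ r x :=
    fun _ _ => rfl
  let p' : Submodule (MonoidAlgebra ℂ Γ) V :=
    { carrier := p
      add_mem' := fun ha hb => p.add_mem ha hb
      zero_mem' := p.zero_mem
      smul_mem' := by
        intro r x hx
        show r • x ∈ p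
        induction r using MonoidAlgebra.induction_on with
        | of g =>
          rw [hsmul, Representation.asAlgebraHom_of]
          exact hp g x hx
        | add f g hf hg =>
          rw [hsmul] at hf hg ⊢
          simp only [map_add, LinearMap.add_apply]
          exact p.add_mem hf hg
        | smul c f hf =>
          rw [hsmul] at hf ⊢
          simp only [map_smul, LinearMap.smul_apply]
          exact p.smul_mem c hf }
  obtain ⟨q', hq'⟩ := MonoidAlgebra.Submodule.exists_isCompl p'
  have hcsmul : ∀ (c : ℂ) (x : V), (algebraMap ℂ (MonoidAlgebra ℂ Γ) c) • x = c • x := by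
    intro c x
    rw [hsmul, AlgHom.commutes]
    rfl
  let q : Submodule ℂ V :=
    { carrier := q'
      add_mem' := fun ha hb => q'.add_mem ha hb
      zero_mem' := q'.zero_mem
      smul_mem' := by
        intro c x hx
        show c • x ∈ q'
        rw [← hcsmul]
        exact q'.smul_mem _ hx }
  refine ⟨q, ?_, ?_⟩
  · intro g x hx
    show V.ρ g x ∈ q'
    have : V.ρ g x = (MonoidAlgebra.of ℂ Γ g) • x := by
      rw [hsmul, Representation.asAlgebraHom_of]
    rw [this]
    exact q'.smul_mem _ hx
  · rw [isCompl_iff]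
    constructor
    · rw [Submodule.disjoint_def]
      intro x hxp hxq
      exact Submodule.disjoint_def.mp hq'.disjoint x hxp hxq
    · rw [codisjoint_iff, Submodule.eq_top_iff']
      intro x
      have hx : x ∈ p' ⊔ q' := by rw [hq'.codisjoint.eq_top]; trivial
      obtain ⟨y, hy, z, hz, rfl⟩ := Submodule.mem_sup.mp hx
      exact Submodule.mem_sup.mpr ⟨y, hy, z, hz, rfl⟩

theorem character_add_of_isCompl (V : FDRep ℂ Γ) (p q : Submodule ℂ V)
    (hp : ∀ (g : Γ) x, x ∈ p → V.ρ g x ∈ p) (hq : ∀ (g : Γ) x, x ∈ q → V.ρ g x ∈ q)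
    (hpq : IsCompl p q) (g : Γ) :
    V.character g = (subFDRep V p hp).character g + (subFDRep V q hq).character g := by
  let N : Bool → Submodule ℂ V := fun b => if b then p else q
  have hint : DirectSum.IsInternal N := by
    rw [DirectSum.isInternal_submodule_iff_isCompl _ (show true ≠ false by simp)
      (by ext b; cases b <;> simp)]
    simpa [N] using hpq
  have hmap : ∀ b : Bool, Set.MapsTo (V.ρ g) (N b) (N b) := by
    intro b
    cases b
    · intro x hx; exact hq g x hx
    · intro x hx; exact hp g x hx
  have htr := LinearMap.trace_eq_sum_trace_restrict hint hmap
  rw [Fintype.sum_bool] at htr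
  exact htr

theorem exists_simple_decomp (V : FDRep ℂ Γ) :
    ∃ (N : ℕ) (S : Fin N → FDRep ℂ Γ), (∀ i, Simple (S i)) ∧
      ∀ g : Γ, V.character g = ∑ i, (S i).character g := by
  generalize hn : Module.finrank ℂ V = n
  induction n using Nat.strong_induction_on generalizing V with
  | _ n ih =>
  rcases Nat.eq_zero_or_pos n with hn0 | hnpos
  · subst hn0
    haveI : Subsingleton V := Module.finrank_zero_iff.mp hn
    refine ⟨0, Fin.elim0, fun i => i.elim0, fun g => ?_⟩
    have hρ : V.ρ g = 0 := Subsingleton.elim _ _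
    show LinearMap.trace ℂ V (V.ρ g) = _
    rw [hρ, map_zero]
    simp
  · haveI hVnt : Nontrivial V := Module.nontrivial_of_finrank_pos (hn ▸ hnpos)
    -- choose an invariant nonzero submodule of minimal finrank
    have htop : (⊤ : Submodule ℂ V) ≠ ⊥ := by
      intro h
      obtain ⟨x, y, hxy⟩ := hVnt
      apply hxy
      have hx : x ∈ (⊥ : Submodule ℂ V) := h ▸ trivial
      have hy : y ∈ (⊥ : Submodule ℂ V) := h ▸ trivial
      rw [Submodule.mem_bot] at hx hy
      rw [hx, hy]
    have hex : ∃ m : ℕ, ∃ p : Submodule ℂ V,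
        (∀ (g : Γ) x, x ∈ p → V.ρ g x ∈ p) ∧ p ≠ ⊥ ∧ Module.finrank ℂ p = m :=
      ⟨Module.finrank ℂ (⊤ : Submodule ℂ V), ⊤, fun _ _ _ => trivial, htop, rfl⟩
    classical
    obtain ⟨p, hp, hpbot, hprank⟩ := Nat.find_spec hex
    have hmin : ∀ m < Nat.find hex, ¬ ∃ p : Submodule ℂ V,
        (∀ (g : Γ) x, x ∈ p → V.ρ g x ∈ p) ∧ p ≠ ⊥ ∧ Module.finrank ℂ p = m :=
      fun m hm => Nat.find_min hex hm
    -- p gives a simple subrepresentation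
    haveI hPsimple : Simple (subFDRep V p hp) := by
      apply simple_of_no_invariant
      · exact (Submodule.nontrivial_iff_ne_bot).mpr hpbot
      · intro q hq
        by_cases hqbot : q = ⊥
        · exact Or.inl hqbot
        right
        let q' : Submodule ℂ V := q.map p.subtype
        have hq'inv : ∀ (g : Γ) x, x ∈ q' → V.ρ g x ∈ q' := by
          rintro g x ⟨y, hy, rfl⟩
          exact ⟨(subRep V p hp) g y, hq g y hy, rfl⟩
        have hq'bot : q' ≠ ⊥ := by
          obtain ⟨y, hyq, hy0⟩ := Submodule.exists_mem_ne_zero_of_ne_bot hqbot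
          intro hbot
          have hmem : p.subtype y ∈ q' := ⟨y, hyq, rfl⟩
          rw [hbot, Submodule.mem_bot] at hmem
          exact hy0 (Subtype.ext hmem)
        have hle : Nat.find hex ≤ Module.finrank ℂ q' :=
          Nat.find_le ⟨q', hq'inv, hq'bot, rfl⟩
        have heq : Module.finrank ℂ q' = Module.finrank ℂ q :=
          Submodule.finrank_map_subtype_eq p q
        have hle2 : Module.finrank ℂ q ≤ Module.finrank ℂ p := Submodule.finrank_le q
        have hcar : Module.finrank ℂ (subFDRep V p hp) = Module.finrank ℂ p := rfl
        apply Submodule.eq_top_of_finrank_eq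
        omega
    obtain ⟨r, hr, hpr⟩ := exists_invariant_compl V p hp
    have hrrank : Module.finrank ℂ p + Module.finrank ℂ r = n := by
      rw [← hn]
      exact Submodule.finrank_add_eq_of_isCompl hpr
    have hppos : 0 < Module.finrank ℂ p := by
      have : Nontrivial p := Submodule.nontrivial_iff_ne_bot.mpr hpbot
      exact Module.finrank_pos
    obtain ⟨N', S', hS'simple, hS'char⟩ :=
      ih (Module.finrank ℂ r) (by omega) (subFDRep V r hr) rfl
    refine ⟨N' + 1, Fin.cons (subFDRep V p hp) S', ?_, fun g => ?_⟩
    · intro i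
      refine Fin.cases ?_ ?_ i
      · exact hPsimple
      · exact fun j => hS'simple j
    · rw [character_add_of_isCompl V p r hp hr hpr g, hS'char g]
      rw [Fin.sum_univ_succ]
      simp

end Decomp

end Iso15


/-- Let `G, H ≤ K` be isoclinic finite groups (`K = ⟨G, Z(K)⟩ = ⟨H, Z(K)⟩`),
and let `ρ₁, ρ₂` be irreducible complex representations of `G` extending to representations
`ρK₁, ρK₂` of `K` (extension expressed on characters).  Then the multisets of dimensions of
the irreducible summands of `ρ₁ ⊗ ρ₂` and of `(ρK₁|_H) ⊗ (ρK₂|_H)` coincide: there are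
decompositions into equally many simple summands `S i` resp. `T i` (expressed by character
identities, which determine the decompositions up to isomorphism) with
`dim S i = dim T i` for all `i` (dimensions read off as character values at `1`). -/
theorem isoclinic_tensor_summand_dimensions
    (K : Type) [Group K] [Fintype K] (G H : Subgroup K)
    (hG : G ⊔ Subgroup.center K = ⊤) (hH : H ⊔ Subgroup.center K = ⊤)
    (ρ₁ ρ₂ : FDRep ℂ ↥G) [Simple ρ₁] [Simple ρ₂]
    (ρK₁ ρK₂ : FDRep ℂ K)
    (hres₁ : ∀ g : ↥G, ρK₁.character (g : K) = ρ₁.character g)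
    (hres₂ : ∀ g : ↥G, ρK₂.character (g : K) = ρ₂.character g) :
    ∃ (N : ℕ) (S : Fin N → FDRep ℂ ↥G) (T : Fin N → FDRep ℂ ↥H),
      (∀ i, Simple (S i)) ∧ (∀ i, Simple (T i)) ∧
      (∀ g : ↥G, ρ₁.character g * ρ₂.character g = ∑ i, (S i).character g) ∧
      (∀ h : ↥H, ρK₁.character (h : K) * ρK₂.character (h : K) = ∑ i, (T i).character h) ∧
      (∀ i, (S i).character 1 = (T i).character 1) := by
  obtain ⟨N, U, hUsimple, hUchar⟩ := Iso15.exists_simple_decomp (MonoidalCategory.tensorObj ρK₁ ρK₂)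
  have hUG : ∀ i, Simple (Iso15.resFDRep (U i) G) := fun i =>
    Iso15.resFDRep_simple (U i) G hG
  have hUH : ∀ i, Simple (Iso15.resFDRep (U i) H) := fun i =>
    Iso15.resFDRep_simple (U i) H hH
  have hmul : ∀ k : K, ρK₁.character k * ρK₂.character k = ∑ i, (U i).character k := by
    intro k
    have h := hUchar k
    rw [FDRep.char_tensor, Pi.mul_apply] at h
    exact h
  refine ⟨N, fun i => Iso15.resFDRep (U i) G, fun i => Iso15.resFDRep (U i) H,
    hUG, hUH, ?_, ?_, ?_⟩
  · intro g
    rw [← hres₁ g, ← hres₂ g]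
    rw [hmul (g : K)]
    rfl
  · intro h
    rw [hmul (h : K)]
    rfl
  · intro i
    show (U i).character ((1 : ↥G) : K) = (U i).character ((1 : ↥H) : K)
    rw [OneMemClass.coe_one, OneMemClass.coe_one]
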